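/- arXiv:1810.07327 — 3 statements merged into one kernel-verified Lean document; each statement's English description precedes it below -/
import Mathlib

section
/- Let α > 1, β ∈ (0,1), σ = α/β, M > 0, and s ∈ [0,1]. Define 𝒯_t(x) = ∫_ℝ t^{-β} |ξ|^{-α} χ_{\{t|ξ|^σ > M\}}(ξ) e^{ixξ} dξ. Then |(|∇|^{-s} 𝒯_t)(x)| ≲_s |x|^{s-1} for all x ≠ 0, with implicit constant independent of t > 0. -/
open MeasureTheory Complex

open Set Filter Topology

lemma aux_norm (a x ξ : ℝ) (hξ : 0 < ξ) :
    ‖((ξ ^ (-a) : ℝ) : ℂ) * Complex.exp (Complex.I * x * ξ)‖ = ξ ^ (-a) := by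
  have h1 : Complex.I * x * ξ = ((x * ξ : ℝ) : ℂ) * Complex.I := by push_cast; ring
  rw [norm_mul, h1, Complex.norm_exp_ofReal_mul_I, mul_one, Complex.norm_real, Real.norm_eq_abs,
    _root_.abs_of_nonneg (Real.rpow_nonneg hξ.le _)]

lemma aux_cont (a x R : ℝ) (hR : 0 < R) :
    ContinuousOn (fun ξ : ℝ => ((ξ ^ (-a) : ℝ) : ℂ) * Complex.exp (Complex.I * x * ξ)) (Ioi R) := by
  apply ContinuousOn.mul
  · exact Complex.continuous_ofReal.comp_continuousOn
      (fun ξ hξ => (Real.continuousAt_rpow_const ξ (-a) (Or.inl (hR.trans hξ).ne')).continuousWithinAt)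
  · exact (Complex.continuous_exp.comp (by continuity)).continuousOn

lemma aux_int (a x R : ℝ) (ha : 1 < a) (hR : 0 < R) :
    IntegrableOn (fun ξ : ℝ => ((ξ ^ (-a) : ℝ) : ℂ) * Complex.exp (Complex.I * x * ξ)) (Ioi R) := by
  apply Integrable.mono' (integrableOn_Ioi_rpow_of_lt (show -a < -1 by linarith) hR)
  · exact (aux_cont a x R hR).aestronglyMeasurable measurableSet_Ioi
  · filter_upwards [ae_restrict_mem measurableSet_Ioi] with ξ hξ
    rw [aux_norm a x ξ (hR.trans hξ)]

lemma aux_bound1 (a x R : ℝ) (ha : 1 < a) (hR : 0 < R) :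
    ‖∫ ξ in Ioi R, ((ξ ^ (-a) : ℝ) : ℂ) * Complex.exp (Complex.I * x * ξ)‖
      ≤ R ^ (1 - a) / (a - 1) := by
  have h := norm_integral_le_of_norm_le (integrableOn_Ioi_rpow_of_lt (show -a < -1 by linarith) hR)
    (by filter_upwards [ae_restrict_mem measurableSet_Ioi] with ξ hξ
        rw [aux_norm a x ξ (hR.trans hξ)])
  refine h.trans ?_
  rw [integral_Ioi_rpow_of_lt (show -a < -1 by linarith) hR]
  rw [show -a + 1 = 1 - a by ring, show (1 - a) = -(a - 1) by ring, div_neg, neg_div, neg_neg,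
    show -(a-1) = 1 - a by ring]

lemma aux_bound2 (a x R : ℝ) (ha : 1 < a) (hR : 0 < R) (hx : x ≠ 0) :
    ‖∫ ξ in Ioi R, ((ξ ^ (-a) : ℝ) : ℂ) * Complex.exp (Complex.I * x * ξ)‖
      ≤ 2 * R ^ (-a) / |x| := by
  have hxa : (0:ℝ) < |x| := abs_pos.mpr hx
  set c : ℂ := Complex.I * (x : ℂ) with hc
  have hc0 : c ≠ 0 := mul_ne_zero Complex.I_ne_zero (Complex.ofReal_ne_zero.mpr hx)
  have hcnorm : ‖c‖ = |x| := by
    rw [hc, norm_mul, Complex.norm_I, one_mul, Complex.norm_real,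
      Real.norm_eq_abs]
  set f : ℝ → ℂ := fun ξ => ((ξ ^ (-a) : ℝ) : ℂ) * Complex.exp (Complex.I * x * ξ) with hf
  set g : ℝ → ℂ := fun ξ => ((-a : ℂ) / c) * (((ξ ^ (-(a+1)) : ℝ) : ℂ) * Complex.exp (Complex.I * x * ξ)) with hg
  set F : ℝ → ℂ := fun ξ => ((ξ ^ (-a) : ℝ) : ℂ) * Complex.exp (Complex.I * x * ξ) / c with hF
  have hderiv : ∀ ξ ∈ Ioi R, HasDerivAt F (f ξ + g ξ) ξ := by
    intro ξ hξ
    have hξ0 : 0 < ξ := hR.trans hξ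
    have h1 : HasDerivAt (fun y : ℝ => y ^ (-a)) ((-a) * ξ ^ (-a - 1)) ξ :=
      Real.hasDerivAt_rpow_const (Or.inl hξ0.ne')
    have h2 : HasDerivAt (fun y : ℝ => Complex.exp (Complex.I * x * y))
        (Complex.exp (Complex.I * x * ξ) * c) ξ := by
      have hid : HasDerivAt (fun y : ℝ => (y : ℂ)) 1 ξ := (hasDerivAt_id ξ).ofReal_comp
      have := (hid.const_mul c).cexp
      simpa [hc, mul_assoc] using this
    have h3 := ((h1.ofReal_comp.mul h2)).div_const c
    refine h3.congr_deriv ?_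
    rw [hf, hg]
    push_cast
    rw [show (-(a+1) : ℝ) = -a - 1 by ring]
    field_simp
    ring
  have hcont : ContinuousWithinAt F (Ici R) R := by
    apply ContinuousAt.continuousWithinAt
    apply ContinuousAt.div_const
    apply ContinuousAt.mul
    · exact Complex.continuous_ofReal.continuousAt.comp
        (Real.continuousAt_rpow_const R (-a) (Or.inl hR.ne'))
    · exact (Complex.continuous_exp.comp (by continuity)).continuousAt
  have hfint : IntegrableOn f (Ioi R) := aux_int a x R ha hR
  have hgint : IntegrableOn g (Ioi R) := (aux_int (a+1) x R (by linarith) hR).const_mul _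
  have htend : Tendsto F atTop (𝓝 0) := by
    have hev : ∀ᶠ ξ in (atTop : Filter ℝ), ‖F ξ‖ ≤ ξ ^ (-a) / |x| := by
      filter_upwards [eventually_gt_atTop (0:ℝ)] with ξ hξ
      rw [hF]
      simp only []
      rw [norm_div, aux_norm a x ξ hξ, hcnorm]
    have hlim : Tendsto (fun ξ : ℝ => ξ ^ (-a) / |x|) atTop (𝓝 0) := by
      simpa using (tendsto_rpow_neg_atTop (show (0:ℝ) < a by linarith)).div_const |x|
    exact squeeze_zero_norm' hev hlim
  have key := integral_Ioi_of_hasDerivAt_of_tendsto hcont hderiv (hfint.add hgint) htend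
  rw [integral_add hfint hgint] at key
  have h4 : ∫ ξ in Ioi R, f ξ = -(F R) - ∫ ξ in Ioi R, g ξ := by
    rw [eq_sub_iff_add_eq, key, zero_sub]
  rw [show (∫ ξ in Ioi R, ((ξ ^ (-a) : ℝ) : ℂ) * Complex.exp (Complex.I * x * ξ))
      = ∫ ξ in Ioi R, f ξ from rfl, h4]
  have hFR : ‖F R‖ = R ^ (-a) / |x| := by
    rw [hF]; simp only []
    rw [norm_div, aux_norm a x R hR, hcnorm]
  have hgnorm : ‖∫ ξ in Ioi R, g ξ‖ ≤ R ^ (-a) / |x| := by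
    rw [hg]
    simp only []
    rw [integral_const_mul, norm_mul]
    have h5 : ‖(-a : ℂ) / c‖ = a / |x| := by
      rw [norm_div, hcnorm]
      congr 1
      rw [show ((-a : ℂ)) = ((-a : ℝ) : ℂ) by push_cast; ring, Complex.norm_real,
        Real.norm_eq_abs, abs_of_neg (by linarith)]
      ring
    rw [h5]
    have h6 := aux_bound1 (a+1) x R (by linarith) hR
    rw [show (1 - (a+1)) = -a by ring, show (a + 1 - 1) = a by ring] at h6
    calc a / |x| * ‖∫ ξ in Ioi R, ((ξ ^ (-(a+1)) : ℝ) : ℂ) * Complex.exp (Complex.I * x * ξ)‖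
        ≤ a / |x| * (R ^ (-a) / a) := by
          apply mul_le_mul_of_nonneg_left h6 (by positivity)
      _ = R ^ (-a) / |x| := by field_simp
  calc ‖-(F R) - ∫ ξ in Ioi R, g ξ‖ ≤ ‖F R‖ + ‖∫ ξ in Ioi R, g ξ‖ := by
        refine (norm_sub_le _ _).trans ?_; rw [norm_neg]
    _ ≤ R ^ (-a) / |x| + R ^ (-a) / |x| := by rw [hFR]; exact add_le_add le_rfl hgnorm
    _ = 2 * R ^ (-a) / |x| := by ring

/-- Kernel decay bound: for `α > 1`, `β ∈ (0,1)`, `σ = α/β`, `s ∈ [0,1]`,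
the kernel `|∇|^{-s}𝒯_t(x) = ∫ t^{-β}|ξ|^{-s-α} χ_{t|ξ|^σ > M}(ξ) e^{ixξ} dξ`
satisfies `|(|∇|^{-s}𝒯_t)(x)| ≲_s |x|^{s-1}` uniformly in `t > 0`. -/
theorem stmt5 (α β M s : ℝ) (hα : 1 < α) (hβ0 : 0 < β) (hβ1 : β < 1)
    (hM : 0 < M) (hs : s ∈ Set.Icc (0:ℝ) 1) :
    ∃ C : ℝ, 0 < C ∧ ∀ t : ℝ, 0 < t → ∀ x : ℝ, x ≠ 0 →
      ‖∫ ξ : ℝ, ((t ^ (-β) : ℝ) : ℂ) * ((|ξ| ^ (-s - α) : ℝ) : ℂ)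
          * (if M < t * |ξ| ^ (α / β) then (1:ℂ) else 0)
          * Complex.exp (Complex.I * (x : ℂ) * (ξ : ℂ))‖
        ≤ C * |x| ^ (s - 1) := by
  obtain ⟨hs0, hs1⟩ := hs
  have ha : 1 < s + α := by linarith
  have hMβ : (0:ℝ) < M ^ (-β) := Real.rpow_pos_of_pos hM _
  refine ⟨2 * M ^ (-β) / (s + α - 1) + 4 * M ^ (-β),
    add_pos (div_pos (by linarith) (by linarith)) (by linarith), ?_⟩
  intro t ht x hx
  have hxa : (0:ℝ) < |x| := abs_pos.mpr hx
  have hxpow : (0:ℝ) < |x| ^ (s - 1) := Real.rpow_pos_of_pos hxa _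
  set R : ℝ := (M / t) ^ (β / α) with hRdef
  have hMt : (0:ℝ) < M / t := div_pos hM ht
  have hR : 0 < R := Real.rpow_pos_of_pos hMt _
  have hαβ : (0:ℝ) < α / β := div_pos (by linarith) hβ0
  have hRpow : R ^ (α / β) = M / t := by
    rw [hRdef, ← Real.rpow_mul hMt.le,
      show β / α * (α / β) = 1 by
        rw [div_mul_div_comm, mul_comm]
        exact div_self (ne_of_gt (mul_pos (by linarith) hβ0)),
      Real.rpow_one]
  have hcond : ∀ ξ : ℝ, (M < t * |ξ| ^ (α / β)) ↔ (R < |ξ|) := by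
    intro ξ
    constructor
    · intro h
      have h2 : R ^ (α/β) < |ξ| ^ (α/β) := by
        rw [hRpow, div_lt_iff₀ ht]
        linarith [h, mul_comm t (|ξ| ^ (α/β))]
      exact (Real.rpow_lt_rpow_iff hR.le (abs_nonneg ξ) hαβ).mp h2
    · intro h
      have h2 : R ^ (α/β) < |ξ| ^ (α/β) := Real.rpow_lt_rpow hR.le h hαβ
      rw [hRpow, div_lt_iff₀ ht] at h2
      linarith [mul_comm (|ξ| ^ (α/β)) t]
  set G : ℝ → ℂ := fun ξ => ((t ^ (-β) : ℝ) : ℂ) * ((|ξ| ^ (-s - α) : ℝ) : ℂ)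
      * Complex.exp (Complex.I * x * ξ) with hG
  have hrw : (fun ξ : ℝ => ((t ^ (-β) : ℝ) : ℂ) * ((|ξ| ^ (-s - α) : ℝ) : ℂ)
      * (if M < t * |ξ| ^ (α / β) then (1:ℂ) else 0) * Complex.exp (Complex.I * x * ξ))
      = (Iio (-R) ∪ Ioi R).indicator G := by
    funext ξ
    rw [Set.indicator_apply]
    by_cases h : M < t * |ξ| ^ (α / β)
    · rw [if_pos h, if_pos, mul_one]
      rcases lt_abs.mp ((hcond ξ).mp h) with h1 | h1
      · exact Or.inr h1
      · exact Or.inl (show ξ < -R by linarith)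
    · rw [if_neg h, if_neg, mul_zero, zero_mul]
      intro hmem
      apply h
      apply (hcond ξ).mpr
      rcases hmem with h1 | h1
      · exact lt_abs.mpr (Or.inr (by simp only [mem_Iio] at h1; linarith))
      · exact lt_abs.mpr (Or.inl h1)
  -- equality of pieces with model integrals
  have hEq1 : EqOn (fun ξ : ℝ => ((t ^ (-β) : ℝ) : ℂ)
      * (((ξ ^ (-(s + α)) : ℝ) : ℂ) * Complex.exp (Complex.I * x * ξ))) G (Ioi R) := by
    intro ξ hξ
    have hξ0 : 0 < ξ := hR.trans hξ
    rw [hG]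
    simp only []
    rw [abs_of_pos hξ0, show (-s - α) = -(s+α) by ring, ← mul_assoc]
  have hEq2 : EqOn (fun ξ : ℝ => ((t ^ (-β) : ℝ) : ℂ)
      * (((ξ ^ (-(s + α)) : ℝ) : ℂ) * Complex.exp (Complex.I * ((-x : ℝ) : ℂ) * ξ)))
      (fun ξ => G (-ξ)) (Ioi R) := by
    intro ξ hξ
    have hξ0 : 0 < ξ := hR.trans hξ
    rw [hG]
    simp only []
    rw [abs_neg, abs_of_pos hξ0, show (-s - α) = -(s+α) by ring,
      show Complex.I * (x:ℂ) * ((-ξ : ℝ) : ℂ) = Complex.I * ((-x : ℝ) : ℂ) * (ξ:ℂ) by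
        push_cast; ring, ← mul_assoc]
  have hIoi_int : IntegrableOn G (Ioi R) :=
    MeasureTheory.IntegrableOn.congr_fun ((aux_int (s+α) x R ha hR).const_mul _)
      hEq1 measurableSet_Ioi
  have hIio_int : IntegrableOn G (Iio (-R)) := by
    rw [← (Measure.measurePreserving_neg (volume : Measure ℝ)).integrableOn_comp_preimage
      (Homeomorph.neg ℝ).measurableEmbedding]
    simp only [Function.comp_def, neg_preimage, neg_Iio, neg_neg]
    exact MeasureTheory.IntegrableOn.congr_fun ((aux_int (s+α) (-x) R ha hR).const_mul _)
      hEq2 measurableSet_Ioi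
  rw [hrw, integral_indicator (measurableSet_Iio.union measurableSet_Ioi),
    setIntegral_union (by rw [Set.disjoint_left]; rintro ξ (h1 : ξ < -R) (h2 : R < ξ); linarith)
      measurableSet_Ioi hIio_int hIoi_int]
  have hIio_eq : ∫ ξ in Iio (-R), G ξ = ((t ^ (-β) : ℝ) : ℂ)
      * ∫ ξ in Ioi R, ((ξ ^ (-(s + α)) : ℝ) : ℂ) * Complex.exp (Complex.I * ((-x : ℝ) : ℂ) * ξ) := by
    rw [← integral_Iic_eq_integral_Iio, ← integral_comp_neg_Ioi, ← integral_const_mul]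
    exact (setIntegral_congr_fun measurableSet_Ioi hEq2).symm
  have hIoi_eq : ∫ ξ in Ioi R, G ξ = ((t ^ (-β) : ℝ) : ℂ)
      * ∫ ξ in Ioi R, ((ξ ^ (-(s + α)) : ℝ) : ℂ) * Complex.exp (Complex.I * x * ξ) := by
    rw [← integral_const_mul]
    exact (setIntegral_congr_fun measurableSet_Ioi hEq1).symm
  rw [hIio_eq, hIoi_eq, ← mul_add]
  rw [norm_mul, Complex.norm_real, Real.norm_eq_abs,
    _root_.abs_of_nonneg (Real.rpow_nonneg ht.le _)]
  have htβ : t ^ (-β) = M ^ (-β) * R ^ α := by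
    have hRα : R ^ α = (M/t) ^ β := by
      rw [hRdef, ← Real.rpow_mul hMt.le, div_mul_cancel₀ _ (ne_of_gt (by linarith : (0:ℝ) < α))]
    rw [hRα, Real.div_rpow hM.le ht.le, Real.rpow_neg hM.le, Real.rpow_neg ht.le]
    have h1 : (0:ℝ) < M ^ β := Real.rpow_pos_of_pos hM _
    have h2 : (0:ℝ) < t ^ β := Real.rpow_pos_of_pos ht _
    field_simp
  set J1 := ∫ ξ in Ioi R, ((ξ ^ (-(s + α)) : ℝ) : ℂ) * Complex.exp (Complex.I * ((-x : ℝ) : ℂ) * ξ)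
  set J2 := ∫ ξ in Ioi R, ((ξ ^ (-(s + α)) : ℝ) : ℂ) * Complex.exp (Complex.I * x * ξ)
  rcases le_or_gt (R * |x|) 1 with hcase | hcase
  · -- small R|x| : trivial bound
    have hb1 : ‖J1‖ ≤ R ^ (1 - (s+α)) / (s + α - 1) := aux_bound1 (s+α) (-x) R ha hR
    have hb2 : ‖J2‖ ≤ R ^ (1 - (s+α)) / (s + α - 1) := aux_bound1 (s+α) x R ha hR
    have hRx : R ≤ |x|⁻¹ := by
      rw [← one_div, le_div_iff₀ hxa]; exact hcase
    have hRs : R ^ (1 - s) ≤ |x| ^ (s - 1) := by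
      calc R ^ (1 - s) ≤ (|x|⁻¹) ^ (1 - s) :=
            Real.rpow_le_rpow hR.le hRx (by linarith)
        _ = |x| ^ (s - 1) := by
            rw [Real.inv_rpow (abs_nonneg x), ← Real.rpow_neg (abs_nonneg x)]
            congr 1; ring
    have hRR : R ^ α * R ^ (1 - (s+α)) = R ^ (1 - s) := by
      rw [← Real.rpow_add hR]; congr 1; ring
    calc t ^ (-β) * ‖J1 + J2‖
        ≤ (M ^ (-β) * R ^ α) * (2 * (R ^ (1 - (s+α)) / (s + α - 1))) := by
          rw [htβ]
          apply mul_le_mul_of_nonneg_left _ (by positivity)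
          calc ‖J1 + J2‖ ≤ ‖J1‖ + ‖J2‖ := norm_add_le _ _
            _ ≤ 2 * (R ^ (1 - (s+α)) / (s + α - 1)) := by linarith
      _ = 2 * M ^ (-β) / (s + α - 1) * (R ^ α * R ^ (1 - (s+α))) := by ring
      _ = 2 * M ^ (-β) / (s + α - 1) * R ^ (1 - s) := by rw [hRR]
      _ ≤ 2 * M ^ (-β) / (s + α - 1) * |x| ^ (s - 1) :=
          mul_le_mul_of_nonneg_left hRs (div_nonneg (by linarith) (by linarith))
      _ ≤ (2 * M ^ (-β) / (s + α - 1) + 4 * M ^ (-β)) * |x| ^ (s - 1) := by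
          apply mul_le_mul_of_nonneg_right (by linarith) hxpow.le
  · -- large R|x| : integration by parts bound
    have hb1 : ‖J1‖ ≤ 2 * R ^ (-(s+α)) / |x| := by
      have := aux_bound2 (s+α) (-x) R ha hR (neg_ne_zero.mpr hx)
      rwa [abs_neg] at this
    have hb2 : ‖J2‖ ≤ 2 * R ^ (-(s+α)) / |x| := aux_bound2 (s+α) x R ha hR hx
    have hxR : |x|⁻¹ ≤ R := by
      rw [← one_div, div_le_iff₀ hxa]; linarith
    have hRs2 : R ^ (-s) ≤ |x| ^ s := by
      calc R ^ (-s) ≤ (|x|⁻¹) ^ (-s) :=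
            Real.rpow_le_rpow_of_nonpos (inv_pos.mpr hxa) hxR (by linarith)
        _ = |x| ^ s := by
            rw [Real.inv_rpow (abs_nonneg x), ← Real.rpow_neg (abs_nonneg x), neg_neg]
    have hRR2 : R ^ α * R ^ (-(s+α)) = R ^ (-s) := by
      rw [← Real.rpow_add hR]; congr 1; ring
    calc t ^ (-β) * ‖J1 + J2‖
        ≤ (M ^ (-β) * R ^ α) * (4 * R ^ (-(s+α)) / |x|) := by
          rw [htβ]
          apply mul_le_mul_of_nonneg_left _ (by positivity)
          calc ‖J1 + J2‖ ≤ ‖J1‖ + ‖J2‖ := norm_add_le _ _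
            _ ≤ 4 * R ^ (-(s+α)) / |x| := by
                rw [div_eq_mul_inv] at *
                nlinarith [inv_pos.mpr hxa, Real.rpow_nonneg hR.le (-(s+α))]
      _ = 4 * M ^ (-β) / |x| * (R ^ α * R ^ (-(s+α))) := by ring
      _ = 4 * M ^ (-β) / |x| * R ^ (-s) := by rw [hRR2]
      _ ≤ 4 * M ^ (-β) / |x| * |x| ^ s :=
          mul_le_mul_of_nonneg_left hRs2 (div_nonneg (by linarith) hxa.le)
      _ = 4 * M ^ (-β) * |x| ^ (s - 1) := by
          rw [Real.rpow_sub hxa, Real.rpow_one]; ring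
      _ ≤ (2 * M ^ (-β) / (s + α - 1) + 4 * M ^ (-β)) * |x| ^ (s - 1) := by
          apply mul_le_mul_of_nonneg_right _ hxpow.le
          have : 0 ≤ 2 * M ^ (-β) / (s + α - 1) := div_nonneg (by linarith) (by linarith)
          linarith
end

section
/- Let β ∈ (0,1), α > 0, and let E_β(z) = Σ_{k≥0} z^k/Γ(βk+1) be the Mittag-Leffler function. For f ∈ L²(ℝ), define mult operator U: (U_T f)^(ξ) = E_β(i^{-β} T^β |ξ|^α) f̂(ξ). Assuming the asymptotic bound |E_β(i^{-β} t^β |ξ|^α) - (1/β) e^{-it|ξ|^σ}| ≲ t^{-β}|ξ|^{-α} for t^β|ξ|^α ≥ M large (where σ = α/β), one has ‖u(t)‖_{L²_x} ≤ C ‖f‖_{L²_x} uniformly in t ≥ 0, and lim_{t→∞} ‖u(t)‖_{L²_x} = (1/β) ‖f‖_{L²_x}, where u(t) = U_t f. -/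
open MeasureTheory Complex Filter

/-- Mittag-Leffler function `E_β(z) = Σ_{k≥0} z^k/Γ(βk+1)`. -/
noncomputable def mlE (β : ℝ) (z : ℂ) : ℂ :=
  ∑' k : ℕ, z ^ k / ((Real.Gamma (β * (k:ℝ) + 1) : ℝ) : ℂ)

/-- Log-convexity (Bohr–Mollerup) step: `x Γ(x) ≤ Γ(x+β) (x+β)^{1-β}`. -/
lemma gamma_step {β x : ℝ} (hβ0 : 0 < β) (hβ1 : β < 1) (hx : 0 < x) :
    x * Real.Gamma x ≤ Real.Gamma (x + β) * (x + β) ^ (1 - β) := by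
  have hxβ : 0 < x + β := by linarith
  have hxβ1 : 0 < x + β + 1 := by linarith
  have hG1 : 0 < Real.Gamma (x + β) := Real.Gamma_pos_of_pos hxβ
  have hGx : 0 < Real.Gamma x := Real.Gamma_pos_of_pos hx
  have hc := Real.convexOn_log_Gamma.2 (Set.mem_Ioi.2 hxβ) (Set.mem_Ioi.2 hxβ1)
      hβ0.le (by linarith : (0:ℝ) ≤ 1 - β) (by ring)
  have hpt : β • (x + β) + (1 - β) • (x + β + 1) = x + 1 := by
    simp [smul_eq_mul]; ring
  rw [hpt] at hc
  simp only [smul_eq_mul, Function.comp_apply] at hc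
  rw [Real.Gamma_add_one hx.ne', Real.Gamma_add_one hxβ.ne'] at hc
  have hlog : Real.log ((x + β) * Real.Gamma (x + β))
      = Real.log (x + β) + Real.log (Real.Gamma (x + β)) :=
    Real.log_mul hxβ.ne' hG1.ne'
  rw [hlog] at hc
  have hc' : Real.log (x * Real.Gamma x)
      ≤ Real.log (Real.Gamma (x + β)) + Real.log (x + β) * (1 - β) := by nlinarith
  calc x * Real.Gamma x = Real.exp (Real.log (x * Real.Gamma x)) :=
        (Real.exp_log (by positivity)).symm
    _ ≤ Real.exp (Real.log (Real.Gamma (x + β)) + Real.log (x + β) * (1 - β)) :=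
        Real.exp_le_exp.2 hc'
    _ = Real.Gamma (x + β) * (x + β) ^ (1 - β) := by
        rw [Real.exp_add, Real.exp_log hG1, Real.rpow_def_of_pos hxβ]

/-- Summability of the Mittag-Leffler coefficient series. -/
lemma ml_summable {β : ℝ} (hβ0 : 0 < β) (hβ1 : β < 1) {R : ℝ} (hR : 0 ≤ R) :
    Summable (fun k : ℕ => R ^ k / Real.Gamma (β * (k:ℝ) + 1)) := by
  rcases eq_or_lt_of_le hR with hR0 | hRpos
  · refine summable_of_ne_finset_zero (s := {0}) fun k hk => ?_
    have hk0 : k ≠ 0 := by simpa using hk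
    simp [← hR0, zero_pow hk0]
  have hx : ∀ k : ℕ, (0:ℝ) < β * (k:ℝ) + 1 := fun k => by positivity
  have hG : ∀ k : ℕ, 0 < Real.Gamma (β * (k:ℝ) + 1) :=
    fun k => Real.Gamma_pos_of_pos (hx k)
  apply summable_of_ratio_norm_eventually_le (r := 1/2) (by norm_num)
  have h1 : Tendsto (fun k : ℕ => (β * (k:ℝ) + 1)) atTop atTop := by
    apply tendsto_atTop_add_const_right
    exact (tendsto_natCast_atTop_atTop (R := ℝ)).const_mul_atTop hβ0
  have hten : Tendsto (fun k : ℕ => 2 * R * (β * (k:ℝ) + 1) ^ (-β)) atTop (nhds 0) := by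
    have := ((tendsto_rpow_neg_atTop hβ0).comp h1).const_mul (2 * R)
    simpa using this
  filter_upwards [hten.eventually_le_const (by norm_num : (0:ℝ) < 1/2)] with k hk
  obtain ⟨x, hxdef⟩ : ∃ x : ℝ, x = β * (k:ℝ) + 1 := ⟨_, rfl⟩
  rw [← hxdef] at hk
  have hxpos : 0 < x := hxdef ▸ hx k
  have hx1 : 1 ≤ x := by
    have : (0:ℝ) ≤ β * (k:ℝ) := by positivity
    rw [hxdef]; linarith
  have hxβ : 0 < x + β := by linarith
  -- (x+β)^(1-β) ≤ 2 * x^(1-β)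
  have h2x : (x + β) ^ (1 - β) ≤ 2 * x ^ (1 - β) := by
    have ha : (x + β) ^ (1 - β) ≤ (2 * x) ^ (1 - β) :=
      Real.rpow_le_rpow hxβ.le (by linarith) (by linarith)
    have hb : (2 * x) ^ (1 - β) = 2 ^ (1 - β) * x ^ (1 - β) :=
      Real.mul_rpow (by norm_num) hxpos.le
    have hc : (2:ℝ) ^ (1 - β) ≤ 2 ^ (1:ℝ) :=
      Real.rpow_le_rpow_of_exponent_le (by norm_num) (by linarith)
    have hxpow : (0:ℝ) ≤ x ^ (1 - β) := Real.rpow_nonneg hxpos.le _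
    rw [hb] at ha
    calc (x + β) ^ (1 - β) ≤ 2 ^ (1 - β) * x ^ (1 - β) := ha
      _ ≤ 2 ^ (1:ℝ) * x ^ (1 - β) := by nlinarith
      _ = 2 * x ^ (1 - β) := by rw [Real.rpow_one]
  have hsplit : x ^ (1 - β) = x ^ (-β) * x := by
    rw [show (1 - β) = -β + 1 by ring, Real.rpow_add hxpos, Real.rpow_one]
  have key : R * ((x + β) ^ (1 - β)) ≤ 1/2 * x := by
    calc R * ((x + β) ^ (1 - β)) ≤ R * (2 * x ^ (1 - β)) := by nlinarith
      _ = (2 * R * x ^ (-β)) * x := by rw [hsplit]; ring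
      _ ≤ 1/2 * x := mul_le_mul_of_nonneg_right hk hxpos.le
  -- final ratio inequality
  have hGx : 0 < Real.Gamma x := Real.Gamma_pos_of_pos hxpos
  have hGxβ : 0 < Real.Gamma (x + β) := Real.Gamma_pos_of_pos hxβ
  have hstep : x * Real.Gamma x ≤ Real.Gamma (x + β) * (x + β) ^ (1 - β) :=
    gamma_step hβ0 hβ1 hxpos
  have harg : β * (((k+1 : ℕ)):ℝ) + 1 = x + β := by rw [hxdef]; push_cast; ring
  have hRk : (0:ℝ) < R ^ k := pow_pos hRpos k
  have hPpos : (0:ℝ) < (x + β) ^ (1 - β) := Real.rpow_pos_of_pos hxβ _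
  have hmain : R ^ (k+1) / Real.Gamma (x + β) ≤ (1/2 * R ^ k) / Real.Gamma x := by
    rw [div_le_div_iff₀ hGxβ hGx, pow_succ]
    have e1 := mul_le_mul_of_nonneg_right key (mul_pos hRk hGx).le
    have e2 := mul_le_mul_of_nonneg_left hstep (by positivity : (0:ℝ) ≤ 1/2 * R ^ k)
    have e3 : (R ^ k * R) * Real.Gamma x * ((x + β) ^ (1 - β))
        ≤ 1/2 * R ^ k * Real.Gamma (x + β) * ((x + β) ^ (1 - β)) := by nlinarith
    exact le_of_mul_le_mul_right e3 hPpos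
  calc ‖R ^ (k+1) / Real.Gamma (β * (((k+1):ℕ):ℝ) + 1)‖
      = R ^ (k+1) / Real.Gamma (x + β) := by
        rw [harg, Real.norm_eq_abs,
          _root_.abs_of_nonneg (div_nonneg (pow_nonneg hR _) hGxβ.le)]
    _ ≤ (1/2 * R ^ k) / Real.Gamma x := hmain
    _ = 1/2 * ‖R ^ k / Real.Gamma (β * ((k:ℕ):ℝ) + 1)‖ := by
        rw [← hxdef, Real.norm_eq_abs,
          _root_.abs_of_nonneg (div_nonneg (pow_nonneg hR _) hGx.le), mul_div_assoc]

lemma ml_term_norm {β : ℝ} (hβ0 : 0 < β) (z : ℂ) (k : ℕ) :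
    ‖z ^ k / ((Real.Gamma (β * (k:ℝ) + 1) : ℝ) : ℂ)‖
      = ‖z‖ ^ k / Real.Gamma (β * (k:ℝ) + 1) := by
  have hG : 0 < Real.Gamma (β * (k:ℝ) + 1) := Real.Gamma_pos_of_pos (by positivity)
  rw [norm_div, norm_pow, Complex.norm_real, Real.norm_eq_abs, _root_.abs_of_pos hG]

lemma ml_summable_norm {β : ℝ} (hβ0 : 0 < β) (hβ1 : β < 1) (z : ℂ) :
    Summable (fun k : ℕ => ‖z ^ k / ((Real.Gamma (β * (k:ℝ) + 1) : ℝ) : ℂ)‖) := by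
  simpa only [ml_term_norm hβ0] using ml_summable hβ0 hβ1 (norm_nonneg z)

lemma mlE_norm_le {β : ℝ} (hβ0 : 0 < β) (hβ1 : β < 1) {R : ℝ} (hR : 0 ≤ R) {z : ℂ}
    (hz : ‖z‖ ≤ R) :
    ‖mlE β z‖ ≤ ∑' k : ℕ, R ^ k / Real.Gamma (β * (k:ℝ) + 1) := by
  have hG : ∀ k : ℕ, 0 < Real.Gamma (β * (k:ℝ) + 1) :=
    fun k => Real.Gamma_pos_of_pos (by positivity)
  calc ‖mlE β z‖ ≤ ∑' k : ℕ, ‖z ^ k / ((Real.Gamma (β * (k:ℝ) + 1) : ℝ) : ℂ)‖ :=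
        norm_tsum_le_tsum_norm (ml_summable_norm hβ0 hβ1 z)
    _ = ∑' k : ℕ, ‖z‖ ^ k / Real.Gamma (β * (k:ℝ) + 1) := by
        exact tsum_congr (ml_term_norm hβ0 z)
    _ ≤ ∑' k : ℕ, R ^ k / Real.Gamma (β * (k:ℝ) + 1) := by
        refine Summable.tsum_le_tsum (fun k => ?_) (ml_summable hβ0 hβ1 (norm_nonneg z))
          (ml_summable hβ0 hβ1 hR)
        gcongr

lemma one_le_mlsum {β : ℝ} (hβ0 : 0 < β) (hβ1 : β < 1) {R : ℝ} (hR : 0 ≤ R) :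
    1 ≤ ∑' k : ℕ, R ^ k / Real.Gamma (β * (k:ℝ) + 1) := by
  have h0 : (R ^ (0:ℕ) / Real.Gamma (β * ((0:ℕ):ℝ) + 1)) = 1 := by
    simp [Real.Gamma_one]
  calc (1:ℝ) = R ^ (0:ℕ) / Real.Gamma (β * ((0:ℕ):ℝ) + 1) := h0.symm
    _ ≤ ∑' k : ℕ, R ^ k / Real.Gamma (β * (k:ℝ) + 1) :=
        Summable.le_tsum (ml_summable hβ0 hβ1 hR) 0 fun k _ =>
          div_nonneg (pow_nonneg hR _) (Real.Gamma_pos_of_pos (by positivity)).le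

lemma arg_norm (β : ℝ) {r : ℝ} (hr : 0 ≤ r) :
    ‖Complex.I ^ (-(β:ℂ)) * ((r:ℝ) : ℂ)‖ = r := by
  have h1 : ‖Complex.I ^ (-(β:ℂ))‖ = 1 := by
    rw [show (-(β:ℂ)) = (((-β : ℝ)):ℂ) by push_cast; ring, Complex.norm_cpow_real]
    simp
  rw [norm_mul, h1, one_mul, Complex.norm_real, Real.norm_eq_abs,
    _root_.abs_of_nonneg hr]

lemma mlE_measurable {β α : ℝ} (t : ℝ) (hβ0 : 0 < β) (hβ1 : β < 1) :
    Measurable fun ξ : ℝ =>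
      mlE β (Complex.I ^ (-(β:ℂ)) * ((t ^ β * |ξ| ^ α : ℝ) : ℂ)) := by
  have hbase : Measurable fun ξ : ℝ =>
      (Complex.I ^ (-(β:ℂ)) * ((t ^ β * |ξ| ^ α : ℝ) : ℂ)) := by
    apply Measurable.const_mul
    exact Complex.measurable_ofReal.comp
      (measurable_const.mul ((measurable_id.abs).pow measurable_const))
  apply measurable_of_tendsto_metrizable' atTop
    (f := fun n ξ => ∑ k ∈ Finset.range n,
      (Complex.I ^ (-(β:ℂ)) * ((t ^ β * |ξ| ^ α : ℝ) : ℂ)) ^ k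
        / ((Real.Gamma (β * (k:ℝ) + 1) : ℝ) : ℂ))
  · intro n
    apply Finset.measurable_sum
    intro k _
    exact (hbase.pow_const k).div_const _
  · rw [tendsto_pi_nhds]
    intro ξ
    exact ((ml_summable_norm hβ0 hβ1 _).of_norm.hasSum).tendsto_sum_nat

/-- The norm of the oscillatory comparison term is `1/β`. -/
lemma cterm_norm {β : ℝ} (hβ0 : 0 < β) (t x : ℝ) :
    ‖((1/β : ℝ) : ℂ) * Complex.exp (-(Complex.I * (t : ℂ) * ((x : ℝ) : ℂ)))‖ = 1/β := by
  have hre : (-(Complex.I * (t : ℂ) * ((x : ℝ) : ℂ))).re = 0 := by simp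
  rw [norm_mul, Complex.norm_real, Real.norm_eq_abs, _root_.abs_of_pos (by positivity),
    Complex.norm_exp, hre, Real.exp_zero, mul_one]

/-- Uniform `L²` bound and asymptotic mass for the linear space-time fractional
Schrödinger multiplier `E_β(i^{-β} t^β |ξ|^α)` (stated on the Fourier side, `g = f̂`):
`‖u(t)‖_{L²} ≤ C‖f‖_{L²}` uniformly in `t ≥ 0`, and
`lim_{t→∞} ‖u(t)‖_{L²} = (1/β)‖f‖_{L²}`. -/
theorem stmt11 (β α : ℝ) (hβ : β ∈ Set.Ioo (0:ℝ) 1) (hα : 0 < α)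
    (g : ℝ → ℂ) (hg : MemLp g 2 volume)
    (hasym : ∃ M C₀ : ℝ, 0 < M ∧ 0 < C₀ ∧ ∀ t ξ : ℝ, 0 < t →
      M ≤ t ^ β * |ξ| ^ α →
      ‖mlE β (Complex.I ^ (-(β:ℂ)) * ((t ^ β * |ξ| ^ α : ℝ) : ℂ))
          - ((1/β : ℝ) : ℂ) * Complex.exp (-(Complex.I * (t : ℂ) * ((|ξ| ^ (α/β) : ℝ) : ℂ)))‖
        ≤ C₀ * t ^ (-β) * |ξ| ^ (-α)) :
    (∃ C : ℝ, 0 < C ∧ ∀ t : ℝ, 0 ≤ t →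
        (∫ ξ : ℝ, ‖mlE β (Complex.I ^ (-(β:ℂ)) * ((t ^ β * |ξ| ^ α : ℝ) : ℂ)) * g ξ‖ ^ 2) ^ ((1:ℝ)/2)
          ≤ C * (∫ ξ : ℝ, ‖g ξ‖ ^ 2) ^ ((1:ℝ)/2))
    ∧ Tendsto (fun t : ℝ =>
        (∫ ξ : ℝ, ‖mlE β (Complex.I ^ (-(β:ℂ)) * ((t ^ β * |ξ| ^ α : ℝ) : ℂ)) * g ξ‖ ^ 2) ^ ((1:ℝ)/2))
        atTop (nhds ((1/β) * (∫ ξ : ℝ, ‖g ξ‖ ^ 2) ^ ((1:ℝ)/2))) := by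
  obtain ⟨hβ0, hβ1⟩ := hβ
  obtain ⟨M, C₀, hM, hC₀, hAS⟩ := hasym
  have hS1 : 1 ≤ ∑' k : ℕ, M ^ k / Real.Gamma (β * (k:ℝ) + 1) :=
    one_le_mlsum hβ0 hβ1 hM.le
  set B : ℝ := max (∑' k : ℕ, M ^ k / Real.Gamma (β * (k:ℝ) + 1)) (1/β + C₀/M) with hBdef
  have hB0 : 0 < B := lt_of_lt_of_le one_pos (le_trans hS1 (le_max_left _ _))
  -- global bound on the multiplier
  have hbnd : ∀ t ξ : ℝ, 0 ≤ t →
      ‖mlE β (Complex.I ^ (-(β:ℂ)) * ((t ^ β * |ξ| ^ α : ℝ) : ℂ))‖ ≤ B := by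
    intro t ξ ht
    have hr : (0:ℝ) ≤ t ^ β * |ξ| ^ α :=
      mul_nonneg (Real.rpow_nonneg ht _) (Real.rpow_nonneg (abs_nonneg ξ) _)
    have hnz : ‖Complex.I ^ (-(β:ℂ)) * ((t ^ β * |ξ| ^ α : ℝ) : ℂ)‖ = t ^ β * |ξ| ^ α :=
      arg_norm β hr
    rcases le_or_gt (t ^ β * |ξ| ^ α) M with hle | hlt
    · exact le_trans (mlE_norm_le hβ0 hβ1 hM.le (le_trans hnz.le hle)) (le_max_left _ _)
    · have hprod : 0 < t ^ β * |ξ| ^ α := lt_trans hM hlt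
      have ht0 : 0 < t := by
        rcases ht.lt_or_eq with h | h
        · exact h
        · exfalso
          rw [← h, Real.zero_rpow hβ0.ne', zero_mul] at hprod
          exact lt_irrefl 0 hprod
      have htβ : 0 < t ^ β := Real.rpow_pos_of_pos ht0 _
      have hA := hAS t ξ ht0 hlt.le
      have hAle : C₀ * t ^ (-β) * |ξ| ^ (-α) ≤ C₀ / M := by
        rw [Real.rpow_neg ht, Real.rpow_neg (abs_nonneg ξ), mul_assoc, ← mul_inv]
        rw [div_eq_mul_inv]
        refine mul_le_mul_of_nonneg_left ?_ hC₀.le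
        exact inv_anti₀ hM hlt.le
      have htri : ‖mlE β (Complex.I ^ (-(β:ℂ)) * ((t ^ β * |ξ| ^ α : ℝ) : ℂ))‖
          ≤ C₀ * t ^ (-β) * |ξ| ^ (-α) + 1/β := by
        have h1 := norm_sub_norm_le
          (mlE β (Complex.I ^ (-(β:ℂ)) * ((t ^ β * |ξ| ^ α : ℝ) : ℂ)))
          (((1/β : ℝ) : ℂ) * Complex.exp (-(Complex.I * (t : ℂ) * ((|ξ| ^ (α/β) : ℝ) : ℂ))))
        have h2 := cterm_norm hβ0 t (|ξ| ^ (α/β))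
        linarith [h1.trans hA, h2.le]
      calc ‖mlE β (Complex.I ^ (-(β:ℂ)) * ((t ^ β * |ξ| ^ α : ℝ) : ℂ))‖
          ≤ C₀ * t ^ (-β) * |ξ| ^ (-α) + 1/β := htri
        _ ≤ 1/β + C₀/M := by linarith
        _ ≤ B := le_max_right _ _
  -- integrability of ‖g‖²
  have hg2 : Integrable (fun ξ : ℝ => ‖g ξ‖ ^ 2) volume := by
    have h := hg.integrable_norm_rpow two_ne_zero ENNReal.ofNat_ne_top
    simp only [ENNReal.toReal_ofNat] at h
    refine h.congr (Eventually.of_forall fun ξ => ?_)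
    simp only [show ((2:ℝ)) = ((2:ℕ):ℝ) by norm_num, Real.rpow_natCast]
  have hgm : AEStronglyMeasurable g volume := hg.1
  have hasm : ∀ t : ℝ, AEStronglyMeasurable
      (fun ξ : ℝ => ‖mlE β (Complex.I ^ (-(β:ℂ)) * ((t ^ β * |ξ| ^ α : ℝ) : ℂ)) * g ξ‖ ^ 2)
      volume := by
    intro t
    have h1 : AEStronglyMeasurable
        (fun ξ : ℝ => mlE β (Complex.I ^ (-(β:ℂ)) * ((t ^ β * |ξ| ^ α : ℝ) : ℂ)) * g ξ)
        volume := (mlE_measurable t hβ0 hβ1).aestronglyMeasurable.mul hgm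
    exact (continuous_pow 2).comp_aestronglyMeasurable h1.norm
  have hbound_int : Integrable (fun ξ : ℝ => B ^ 2 * ‖g ξ‖ ^ 2) volume := hg2.const_mul _
  have hptbd : ∀ t : ℝ, 0 ≤ t → ∀ ξ : ℝ,
      ‖mlE β (Complex.I ^ (-(β:ℂ)) * ((t ^ β * |ξ| ^ α : ℝ) : ℂ)) * g ξ‖ ^ 2
        ≤ B ^ 2 * ‖g ξ‖ ^ 2 := by
    intro t ht ξ
    rw [norm_mul, mul_pow]
    refine mul_le_mul_of_nonneg_right ?_ (by positivity)
    exact pow_le_pow_left₀ (norm_nonneg _) (hbnd t ξ ht) 2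
  have hXnn : (0:ℝ) ≤ ∫ ξ : ℝ, ‖g ξ‖ ^ 2 := integral_nonneg fun ξ => by positivity
  constructor
  · refine ⟨B, hB0, fun t ht => ?_⟩
    have hInn : (0:ℝ) ≤ ∫ ξ : ℝ,
        ‖mlE β (Complex.I ^ (-(β:ℂ)) * ((t ^ β * |ξ| ^ α : ℝ) : ℂ)) * g ξ‖ ^ 2 :=
      integral_nonneg fun ξ => by positivity
    have hle : (∫ ξ : ℝ, ‖mlE β (Complex.I ^ (-(β:ℂ)) * ((t ^ β * |ξ| ^ α : ℝ) : ℂ)) * g ξ‖ ^ 2)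
        ≤ ∫ ξ : ℝ, B ^ 2 * ‖g ξ‖ ^ 2 :=
      integral_mono_of_nonneg (Eventually.of_forall fun ξ => by positivity) hbound_int
        (Eventually.of_forall fun ξ => hptbd t ht ξ)
    have hsq : ((B:ℝ) ^ 2) ^ ((1:ℝ)/2) = B := by
      rw [← Real.rpow_natCast B 2, ← Real.rpow_mul hB0.le]
      norm_num
    calc (∫ ξ : ℝ, ‖mlE β (Complex.I ^ (-(β:ℂ)) * ((t ^ β * |ξ| ^ α : ℝ) : ℂ)) * g ξ‖ ^ 2)
          ^ ((1:ℝ)/2)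
        ≤ (∫ ξ : ℝ, B ^ 2 * ‖g ξ‖ ^ 2) ^ ((1:ℝ)/2) :=
          Real.rpow_le_rpow hInn hle (by norm_num)
      _ = (B ^ 2 * ∫ ξ : ℝ, ‖g ξ‖ ^ 2) ^ ((1:ℝ)/2) := by rw [integral_const_mul]
      _ = B * (∫ ξ : ℝ, ‖g ξ‖ ^ 2) ^ ((1:ℝ)/2) := by
          rw [Real.mul_rpow (sq_nonneg B) hXnn, hsq]
  · -- the limit
    have haeξ : ∀ᵐ ξ : ℝ ∂(volume : Measure ℝ), ξ ≠ 0 := by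
      rw [ae_iff]
      have : {a : ℝ | ¬ a ≠ 0} = {0} := by ext a; simp
      rw [this]
      exact Real.volume_singleton
    have hlim : Tendsto
        (fun t : ℝ => ∫ ξ : ℝ,
          ‖mlE β (Complex.I ^ (-(β:ℂ)) * ((t ^ β * |ξ| ^ α : ℝ) : ℂ)) * g ξ‖ ^ 2)
        atTop (nhds (∫ ξ : ℝ, ((1/β) * ‖g ξ‖) ^ 2)) := by
      apply tendsto_integral_filter_of_dominated_convergence
        (fun ξ : ℝ => B ^ 2 * ‖g ξ‖ ^ 2)
      · exact Eventually.of_forall fun t => hasm t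
      · filter_upwards [eventually_ge_atTop (0:ℝ)] with t ht
        refine Eventually.of_forall fun ξ => ?_
        rw [Real.norm_eq_abs, _root_.abs_of_nonneg (by positivity)]
        exact hptbd t ht ξ
      · exact hbound_int
      · filter_upwards [haeξ] with ξ hξ
        have hξα : 0 < |ξ| ^ α := Real.rpow_pos_of_pos (abs_pos.2 hξ) α
        have hT : Tendsto (fun t : ℝ => t ^ β * |ξ| ^ α) atTop atTop :=
          (tendsto_rpow_atTop hβ0).atTop_mul_const hξα
        have hz : Tendsto (fun t : ℝ => C₀ * t ^ (-β) * |ξ| ^ (-α)) atTop (nhds 0) := by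
          have h1 := ((tendsto_rpow_neg_atTop hβ0).const_mul C₀).mul_const (|ξ| ^ (-α))
          simpa using h1
        have hnorm : Tendsto
            (fun t : ℝ => ‖mlE β (Complex.I ^ (-(β:ℂ)) * ((t ^ β * |ξ| ^ α : ℝ) : ℂ))‖)
            atTop (nhds (1/β)) := by
          rw [tendsto_iff_dist_tendsto_zero]
          apply squeeze_zero' (Eventually.of_forall fun t => dist_nonneg) ?_ hz
          filter_upwards [hT.eventually_ge_atTop M, eventually_gt_atTop (0:ℝ)] with t h1 h2
          have hA := hAS t ξ h2 h1
          have hc := cterm_norm hβ0 t (|ξ| ^ (α/β))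
          have h3 := abs_norm_sub_norm_le
            (mlE β (Complex.I ^ (-(β:ℂ)) * ((t ^ β * |ξ| ^ α : ℝ) : ℂ)))
            (((1/β : ℝ) : ℂ) * Complex.exp (-(Complex.I * (t : ℂ) * ((|ξ| ^ (α/β) : ℝ) : ℂ))))
          rw [hc] at h3
          rw [Real.dist_eq]
          exact h3.trans hA
        have h1 : Tendsto
            (fun t : ℝ => ‖mlE β (Complex.I ^ (-(β:ℂ)) * ((t ^ β * |ξ| ^ α : ℝ) : ℂ))‖ * ‖g ξ‖)
            atTop (nhds ((1/β) * ‖g ξ‖)) := hnorm.mul_const _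
        have h2 := h1.pow 2
        simpa [norm_mul] using h2
    have hInt : ∫ ξ : ℝ, ((1/β) * ‖g ξ‖) ^ 2 = (1/β) ^ 2 * ∫ ξ : ℝ, ‖g ξ‖ ^ 2 := by
      simp_rw [mul_pow]
      exact integral_const_mul _ _
    rw [hInt] at hlim
    have hcont : Tendsto
        (fun t : ℝ => (∫ ξ : ℝ,
          ‖mlE β (Complex.I ^ (-(β:ℂ)) * ((t ^ β * |ξ| ^ α : ℝ) : ℂ)) * g ξ‖ ^ 2) ^ ((1:ℝ)/2))
        atTop (nhds (((1/β) ^ 2 * ∫ ξ : ℝ, ‖g ξ‖ ^ 2) ^ ((1:ℝ)/2))) :=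
      ((Real.continuousAt_rpow_const _ _ (Or.inr (by norm_num))).tendsto.comp hlim)
    have hfin : (((1/β) ^ 2 : ℝ) * ∫ ξ : ℝ, ‖g ξ‖ ^ 2) ^ ((1:ℝ)/2)
        = (1/β) * (∫ ξ : ℝ, ‖g ξ‖ ^ 2) ^ ((1:ℝ)/2) := by
      rw [Real.mul_rpow (sq_nonneg _) hXnn]
      congr 1
      rw [← Real.rpow_natCast (1/β) 2, ← Real.rpow_mul (by positivity)]
      norm_num
    rw [← hfin]
    exact hcont
end

section
/- Let p ≥ 2 be an integer and λ < 0. Then |∫_ℝ ((1-e^{-ix})/(ix))^p e^{ixλ} dx| ≤ c_p e^{λ} for a constant c_p depending only on p; in particular F(λ) decays exponentially as λ → -∞. -/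
open Set MeasureTheory Complex Filter

noncomputable def phiAux : ℂ → ℂ :=
  dslope (fun z => -Complex.I * (1 - Complex.exp (-(Complex.I * z)))) 0

noncomputable def Gfun (p : ℕ) (lam : ℝ) (z : ℂ) : ℂ :=
  phiAux z ^ p * Complex.exp (Complex.I * z * lam)


lemma phiAux_diff : Differentiable ℂ phiAux := by
  have h : Differentiable ℂ (fun z : ℂ => -Complex.I * (1 - Complex.exp (-(Complex.I * z)))) := by
    fun_prop
  rw [← differentiableOn_univ] at h ⊢
  exact (Complex.differentiableOn_dslope (by simp : (univ : Set ℂ) ∈ nhds 0)).2 h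

lemma phiAux_eq {z : ℂ} (hz : z ≠ 0) :
    phiAux z = (1 - Complex.exp (-(Complex.I * z))) / (Complex.I * z) := by
  rw [phiAux, dslope_of_ne _ hz, slope_def_field]
  simp only [Complex.exp_zero, mul_zero, neg_zero, sub_self, mul_zero, sub_zero]
  field_simp
  ring_nf
  simp [Complex.I_sq]
  ring

lemma phiAux_zero : phiAux 0 = 1 := by
  rw [phiAux, dslope_same]
  have h1 : HasDerivAt (fun z : ℂ => -(Complex.I * z)) (-Complex.I) 0 := by
    simpa using ((hasDerivAt_id (0 : ℂ)).const_mul Complex.I).fun_neg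
  have h2 := ((h1.cexp.const_sub 1).const_mul (-Complex.I))
  have h3 : HasDerivAt (fun z : ℂ => -Complex.I * (1 - Complex.exp (-(Complex.I * z)))) 1 0 := by
    refine h2.congr_deriv ?_
    simp [Complex.exp_zero]
  exact h3.deriv


lemma norm_exp_neg_I_mul_le {z : ℂ} (him : z.im ≤ 0) :
    ‖Complex.exp (-(Complex.I * z))‖ ≤ 1 := by
  rw [Complex.norm_exp]
  simpa using Real.exp_le_one_iff.2 (by simpa using him)

lemma norm_phiAux_le {z : ℂ} (hz : z ≠ 0) (him : z.im ≤ 0) : ‖phiAux z‖ ≤ 2 / ‖z‖ := by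
  rw [phiAux_eq hz, norm_div]
  have h1 : ‖1 - Complex.exp (-(Complex.I * z))‖ ≤ 2 := by
    calc ‖1 - Complex.exp (-(Complex.I * z))‖ ≤ ‖(1 : ℂ)‖ + ‖Complex.exp (-(Complex.I * z))‖ :=
          norm_sub_le _ _
      _ ≤ 1 + 1 := by simpa using norm_exp_neg_I_mul_le him
      _ = 2 := by norm_num
  have h2 : ‖Complex.I * z‖ = ‖z‖ := by simp
  rw [h2]
  exact div_le_div_of_nonneg_right h1 (norm_nonneg z) |>.trans_eq rfl

lemma norm_phiAux_le_two {z : ℂ} (h : ‖z‖ ≤ 1) : ‖phiAux z‖ ≤ 2 := by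
  rcases eq_or_ne z 0 with rfl | hz
  · rw [phiAux_zero]; norm_num
  · rw [phiAux_eq hz, norm_div]
    have hzpos : 0 < ‖z‖ := norm_pos_iff.2 hz
    have h1 : ‖1 - Complex.exp (-(Complex.I * z))‖ ≤ 2 * ‖z‖ := by
      rw [norm_sub_rev]
      have : ‖(-(Complex.I * z))‖ ≤ 1 := by simpa using h
      simpa using Complex.norm_exp_sub_one_le this
    have h2 : ‖Complex.I * z‖ = ‖z‖ := by simp
    rw [h2, div_le_iff₀ hzpos]
    linarith


lemma Gfun_diff (p : ℕ) (lam : ℝ) : Differentiable ℂ (Gfun p lam) := by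
  unfold Gfun
  exact (phiAux_diff.pow p).mul (Complex.differentiable_exp.comp
    ((differentiable_const _ |>.mul differentiable_id).mul (differentiable_const _)))

lemma norm_Gfun (p : ℕ) (lam : ℝ) (z : ℂ) :
    ‖Gfun p lam z‖ = ‖phiAux z‖ ^ p * Real.exp (-z.im * lam) := by
  rw [Gfun, norm_mul, norm_pow, Complex.norm_exp]
  congr 2
  simp [Complex.mul_re, Complex.mul_im]

lemma pow_div_bound {c R : ℝ} (p : ℕ) (hp : 2 ≤ p) (hR : 1 ≤ R) (hc : 0 ≤ c)
    (hcR : c ≤ 2 / R) : c ^ p ≤ 2 ^ p / R ^ 2 := by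
  calc c ^ p ≤ (2 / R) ^ p := by gcongr
    _ = 2 ^ p / R ^ p := div_pow 2 R p
    _ ≤ 2 ^ p / R ^ 2 := by
        have h2 : R ^ 2 ≤ R ^ p := pow_le_pow_right₀ hR hp
        gcongr

lemma norm_Gfun_real_le (p : ℕ) (hp : 2 ≤ p) (lam : ℝ) (x : ℝ) :
    ‖Gfun p lam x‖ ≤ 2 ^ p * 2 / (1 + x ^ 2) := by
  have hnx : ‖(x : ℂ)‖ = |x| := Complex.norm_real x
  have h2p : (0:ℝ) < 2 ^ p := by positivity
  rw [norm_Gfun]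
  simp only [Complex.ofReal_im, neg_zero, zero_mul, Real.exp_zero, mul_one]
  rcases le_or_gt |x| 1 with hx | hx
  · have h1 : ‖phiAux x‖ ^ p ≤ 2 ^ p :=
      pow_le_pow_left₀ (norm_nonneg _) (norm_phiAux_le_two (by rw [hnx]; exact hx)) p
    have hx2 : x ^ 2 ≤ 1 := by nlinarith [_root_.sq_abs x, abs_nonneg x]
    refine h1.trans ?_
    rw [le_div_iff₀ (by positivity)]
    nlinarith
  · have hx0 : (x : ℂ) ≠ 0 := by
      simp only [ne_eq, Complex.ofReal_eq_zero]
      intro h; rw [h] at hx; simp at hx; linarith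
    have h1 : ‖phiAux x‖ ≤ 2 / |x| := by
      rw [← hnx]; exact norm_phiAux_le hx0 (by simp)
    have h2 : ‖phiAux x‖ ^ p ≤ 2 ^ p / |x| ^ 2 :=
      pow_div_bound p hp hx.le (norm_nonneg _) h1
    rw [_root_.sq_abs] at h2
    refine h2.trans ?_
    have hx2 : 1 ≤ x ^ 2 := by nlinarith [_root_.sq_abs x, abs_nonneg x]
    rw [div_le_div_iff₀ (by linarith) (by positivity)]
    nlinarith

lemma norm_Gfun_shift_le (p : ℕ) (hp : 2 ≤ p) (lam : ℝ) (x : ℝ) :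
    ‖Gfun p lam ((x : ℂ) - Complex.I)‖ ≤ 2 ^ p * Real.exp lam * (1 + x ^ 2)⁻¹ := by
  set z : ℂ := (x : ℂ) - Complex.I with hzdef
  have him : z.im = -1 := by simp [hzdef]
  have hz : z ≠ 0 := by
    intro h; rw [h] at him; simp at him
  have hnz2 : ‖z‖ ^ 2 = 1 + x ^ 2 := by
    rw [Complex.sq_norm, Complex.normSq_apply, him]
    simp [hzdef]
    ring
  have hnz1 : 1 ≤ ‖z‖ := by nlinarith [norm_nonneg z, sq_nonneg x]
  have h1 : ‖phiAux z‖ ^ p ≤ 2 ^ p / ‖z‖ ^ 2 :=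
    pow_div_bound p hp hnz1 (norm_nonneg _) (norm_phiAux_le hz (by rw [him]; norm_num))
  rw [hnz2] at h1
  rw [norm_Gfun, him]
  calc ‖phiAux z‖ ^ p * Real.exp (- -1 * lam)
      = ‖phiAux z‖ ^ p * Real.exp lam := by norm_num
    _ ≤ 2 ^ p / (1 + x ^ 2) * Real.exp lam := by gcongr
    _ = 2 ^ p * Real.exp lam * (1 + x ^ 2)⁻¹ := by ring

lemma norm_Gfun_vert_le (p : ℕ) (hp : 2 ≤ p) {lam : ℝ} (hlam : lam < 0) {R s y : ℝ}
    (hR : 1 ≤ R) (hs : |s| = R) (hy1 : -1 ≤ y) (hy0 : y ≤ 0) :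
    ‖Gfun p lam ((s : ℂ) + (y : ℂ) * Complex.I)‖ ≤ 2 ^ p / R ^ 2 := by
  set z : ℂ := (s : ℂ) + (y : ℂ) * Complex.I with hzdef
  have hre : z.re = s := by simp [hzdef]
  have him : z.im = y := by simp [hzdef]
  have hRz : R ≤ ‖z‖ := by
    rw [← hs]; rw [← hre]; exact (Complex.abs_re_le_norm z)
  have hz : z ≠ 0 := by
    intro h
    rw [h] at hRz; simp at hRz; linarith
  have h1 : ‖phiAux z‖ ≤ 2 / R := by
    refine (norm_phiAux_le hz (by rw [him]; exact hy0)).trans ?_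
    gcongr
  have h2 : ‖phiAux z‖ ^ p ≤ 2 ^ p / R ^ 2 := pow_div_bound p hp hR (norm_nonneg _) h1
  have h3 : Real.exp (-z.im * lam) ≤ 1 := by
    rw [him]
    refine Real.exp_le_one_iff.2 ?_
    nlinarith
  rw [norm_Gfun]
  calc ‖phiAux z‖ ^ p * Real.exp (-z.im * lam) ≤ (2 ^ p / R ^ 2) * 1 :=
        mul_le_mul h2 h3 (Real.exp_pos _).le (by positivity)
    _ = 2 ^ p / R ^ 2 := mul_one _


lemma Gfun_integrable_real (p : ℕ) (hp : 2 ≤ p) (lam : ℝ) :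
    Integrable (fun x : ℝ => Gfun p lam x) := by
  refine (integrable_inv_one_add_sq.const_mul (2 ^ p * 2)).mono'
    (((Gfun_diff p lam).continuous.comp Complex.continuous_ofReal).aestronglyMeasurable)
    (ae_of_all _ fun x => ?_)
  simpa [div_eq_mul_inv] using norm_Gfun_real_le p hp lam x

lemma Gfun_integrable_shift (p : ℕ) (hp : 2 ≤ p) (lam : ℝ) :
    Integrable (fun x : ℝ => Gfun p lam ((x : ℂ) - Complex.I)) := by
  refine (integrable_inv_one_add_sq.const_mul (2 ^ p * Real.exp lam)).mono'
    (((Gfun_diff p lam).continuous.comp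
      (Complex.continuous_ofReal.sub continuous_const)).aestronglyMeasurable)
    (ae_of_all _ fun x => ?_)
  simpa [mul_assoc] using norm_Gfun_shift_le p hp lam x

lemma vertical_tendsto (p : ℕ) (hp : 2 ≤ p) {lam : ℝ} (hlam : lam < 0) {sgn : ℝ}
    (hsgn : sgn = 1 ∨ sgn = -1) :
    Tendsto (fun R : ℝ => ∫ y in (-1:ℝ)..0, Gfun p lam ((sgn * R : ℝ) + (y : ℂ) * Complex.I))
      atTop (nhds 0) := by
  have hb : Tendsto (fun R : ℝ => (2:ℝ) ^ p / R ^ 2) atTop (nhds 0) := by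
    have h := (tendsto_pow_atTop (two_ne_zero)).inv_tendsto_atTop (α := ℝ)
    simpa [div_eq_mul_inv] using h.const_mul ((2:ℝ) ^ p)
  refine squeeze_zero_norm' ?_ hb
  filter_upwards [eventually_ge_atTop (1:ℝ)] with R hR
  have habs : |sgn * R| = R := by
    rcases hsgn with h | h <;> rw [h] <;>
      simp [abs_mul, _root_.abs_of_nonneg (le_trans zero_le_one hR)]
  have key := intervalIntegral.norm_integral_le_of_norm_le_const (a := (-1:ℝ)) (b := 0)
    (C := 2 ^ p / R ^ 2) (f := fun y => Gfun p lam ((sgn * R : ℝ) + (y : ℂ) * Complex.I)) ?_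
  · simpa using key
  · intro y hy
    rw [uIoc_of_le (by norm_num : (-1:ℝ) ≤ 0)] at hy
    exact norm_Gfun_vert_le p hp hlam hR habs hy.1.le hy.2

lemma contour (p : ℕ) (hp : 2 ≤ p) {lam : ℝ} (hlam : lam < 0) :
    (∫ x : ℝ, Gfun p lam x) = ∫ x : ℝ, Gfun p lam ((x : ℂ) - Complex.I) := by
  have hrect : ∀ R : ℝ,
      (∫ x in -R..R, Gfun p lam x) = (∫ x in -R..R, Gfun p lam ((x : ℂ) - Complex.I))
        + Complex.I • (∫ y in (-1:ℝ)..0, Gfun p lam (((1:ℝ) * R : ℝ) + (y : ℂ) * Complex.I))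
        - Complex.I • (∫ y in (-1:ℝ)..0, Gfun p lam ((((-1):ℝ) * R : ℝ) + (y : ℂ) * Complex.I)) := by
    intro R
    have h := Complex.integral_boundary_rect_eq_zero_of_differentiableOn (Gfun p lam)
      (-(R : ℂ) - Complex.I) (R : ℂ) ((Gfun_diff p lam).differentiableOn)
    simp only [Complex.sub_re, Complex.neg_re, Complex.ofReal_re, Complex.I_re, sub_zero,
      Complex.sub_im, Complex.neg_im, Complex.ofReal_im, Complex.I_im, neg_zero, zero_sub,
      Complex.ofReal_neg, Complex.ofReal_one, neg_mul, one_mul, Complex.ofReal_zero, zero_mul,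
      add_zero] at h ⊢
    simp only [smul_eq_mul] at h ⊢
    simp only [← sub_eq_add_neg] at h
    linear_combination -h
  have hA := vertical_tendsto p hp hlam (Or.inl rfl) (sgn := 1)
  have hB := vertical_tendsto p hp hlam (Or.inr rfl) (sgn := -1)
  have h1 := intervalIntegral_tendsto_integral (μ := volume) (Gfun_integrable_real p hp lam)
    tendsto_neg_atTop_atBot tendsto_id
  have h2 := intervalIntegral_tendsto_integral (μ := volume) (Gfun_integrable_shift p hp lam)
    tendsto_neg_atTop_atBot tendsto_id
  have h3 : Tendsto (fun R : ℝ => (∫ x in -R..R, Gfun p lam ((x : ℂ) - Complex.I))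
        + Complex.I • (∫ y in (-1:ℝ)..0, Gfun p lam (((1:ℝ) * R : ℝ) + (y : ℂ) * Complex.I))
        - Complex.I • (∫ y in (-1:ℝ)..0, Gfun p lam ((((-1):ℝ) * R : ℝ) + (y : ℂ) * Complex.I)))
      atTop (nhds ((∫ x : ℝ, Gfun p lam ((x : ℂ) - Complex.I)) + Complex.I • (0:ℂ)
        - Complex.I • (0:ℂ))) :=
    (h2.add (hA.const_smul Complex.I)).sub (hB.const_smul Complex.I)
  have h4 : Tendsto (fun R : ℝ => ∫ x in -R..R, Gfun p lam x) atTop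
      (nhds ((∫ x : ℝ, Gfun p lam ((x : ℂ) - Complex.I)) + Complex.I • (0:ℂ)
        - Complex.I • (0:ℂ))) := by
    refine h3.congr fun R => ?_
    exact (hrect R).symm
  have := tendsto_nhds_unique h1 h4
  simpa using this

/-- Exponential decay of `F(λ)` for `λ < 0` and integer `p ≥ 2`:
`|∫_ℝ ((1-e^{-ix})/(ix))^p e^{ixλ} dx| ≤ c_p e^λ`. -/
theorem stmt14 (p : ℕ) (hp : 2 ≤ p) :
    ∃ c : ℝ, 0 < c ∧ ∀ lam : ℝ, lam < 0 →
      ‖∫ x : ℝ, ((1 - Complex.exp (-(Complex.I * (x : ℂ)))) / (Complex.I * (x : ℂ))) ^ p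
          * Complex.exp (Complex.I * (x : ℂ) * (lam : ℂ))‖
        ≤ c * Real.exp lam := by
  refine ⟨2 ^ p * Real.pi, by positivity, fun lam hlam => ?_⟩
  have heq : (∫ x : ℝ, ((1 - Complex.exp (-(Complex.I * (x : ℂ)))) / (Complex.I * (x : ℂ))) ^ p
      * Complex.exp (Complex.I * (x : ℂ) * (lam : ℂ))) = ∫ x : ℝ, Gfun p lam x := by
    refine integral_congr_ae ?_
    have h0 : ∀ᵐ (x : ℝ), x ≠ 0 := by
      refine MeasureTheory.ae_iff.2 ?_
      have hset : {a : ℝ | ¬ a ≠ 0} = {0} := by ext a; simp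
      rw [hset]
      exact measure_singleton 0
    filter_upwards [h0] with x hx
    rw [Gfun, phiAux_eq (Complex.ofReal_ne_zero.2 hx)]
  rw [heq, contour p hp hlam]
  have hbound := MeasureTheory.norm_integral_le_of_norm_le (μ := volume)
    (g := fun x : ℝ => 2 ^ p * Real.exp lam * (1 + x ^ 2)⁻¹)
    (by simpa [mul_assoc] using integrable_inv_one_add_sq.const_mul (2 ^ p * Real.exp lam))
    (ae_of_all _ fun x => norm_Gfun_shift_le p hp lam x)
  refine hbound.trans ?_
  rw [MeasureTheory.integral_const_mul, integral_univ_inv_one_add_sq]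
  exact le_of_eq (by ring)
end
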